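/- Dual variable range estimation via the duality gap: suppose ᾱ ∈ ℝ^n maximizes D over ℝ^n. Then for every α ∈ ℝ^n and every β ∈ ℝ^p, P(β) − D(α) ≥ 0 and ‖α − ᾱ‖ ≤ √(2(P(β) − D(α))). -/

import Mathlib

noncomputable section

/-- ℓ₀ "norm": number of nonzero entries, as a real number. -/
def zeroNorm {p : ℕ} (β : EuclideanSpace ℝ (Fin p)) : ℝ :=
  ((Finset.univ.filter fun j => β j ≠ 0).card : ℝ)

/-- ℓ₁ norm. -/
def oneNorm {p : ℕ} (β : EuclideanSpace ℝ (Fin p)) : ℝ := ∑ j, |β j|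

/-- `X β`, where `x j` is the `j`-th column of `X`. -/
def Xmul {n p : ℕ} (x : Fin p → EuclideanSpace ℝ (Fin n))
    (β : EuclideanSpace ℝ (Fin p)) : EuclideanSpace ℝ (Fin n) :=
  ∑ j, β j • x j

/-- Primal objective `P(β)`. -/
def Pobj {n p : ℕ} (x : Fin p → EuclideanSpace ℝ (Fin n)) (y : EuclideanSpace ℝ (Fin n))
    (l0 l1 l2 : ℝ) (β : EuclideanSpace ℝ (Fin p)) : ℝ :=
  (1/2) * ‖y - Xmul x β‖^2 + l0 * zeroNorm β + l1 * oneNorm β + l2 * ‖β‖^2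

/-- Lagrangian `L(β, α)`. -/
def Lag {n p : ℕ} (x : Fin p → EuclideanSpace ℝ (Fin n)) (y : EuclideanSpace ℝ (Fin n))
    (l0 l1 l2 : ℝ) (β : EuclideanSpace ℝ (Fin p)) (α : EuclideanSpace ℝ (Fin n)) : ℝ :=
  (inner ℝ α (Xmul x β) : ℝ) - (1/2) * ‖α‖^2 - (inner ℝ y α : ℝ)
    + l0 * zeroNorm β + l1 * oneNorm β + l2 * ‖β‖^2

/-- `η_j(α) = −⟨x_j, α⟩ / (2 λ₂)`. -/
def etav {n p : ℕ} (x : Fin p → EuclideanSpace ℝ (Fin n)) (l2 : ℝ)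
    (α : EuclideanSpace ℝ (Fin n)) (j : Fin p) : ℝ :=
  -(inner ℝ (x j) α : ℝ) / (2 * l2)

/-- Threshold `η₀ = (2√(λ₀λ₂) + λ₁)/(2λ₂)`. -/
def eta0 (l0 l1 l2 : ℝ) : ℝ := (2 * Real.sqrt (l0 * l2) + l1) / (2 * l2)

/-- Scalar function `ψ` appearing in the dual objective. -/
def psi (l0 l1 l2 : ℝ) (t : ℝ) : ℝ :=
  if eta0 l0 l1 l2 ≤ |t| then -l2 * (|t| - l1 / (2 * l2))^2 + l0 else 0

/-- Dual objective `D(α)` for the square loss. -/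
def Dobj {n p : ℕ} (x : Fin p → EuclideanSpace ℝ (Fin n)) (y : EuclideanSpace ℝ (Fin n))
    (l0 l1 l2 : ℝ) (α : EuclideanSpace ℝ (Fin n)) : ℝ :=
  -(1/2) * ‖α‖^2 - (inner ℝ y α : ℝ) + ∑ j : Fin p, psi l0 l1 l2 (etav x l2 α j)

/-- Thresholding map `𝔅`. -/
def Bth (l0 l1 l2 : ℝ) (t : ℝ) : ℝ :=
  if eta0 l0 l1 l2 ≤ |t| then Real.sign t * (|t| - l1 / (2 * l2)) else 0

/-- Primal-dual link `β(α)` with entries `β_j(α) = 𝔅(η_j(α))`. -/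
def betaOf {n p : ℕ} (x : Fin p → EuclideanSpace ℝ (Fin n)) (l0 l1 l2 : ℝ)
    (α : EuclideanSpace ℝ (Fin n)) : EuclideanSpace ℝ (Fin p) :=
  WithLp.toLp 2 (fun j => Bth l0 l1 l2 (etav x l2 α j))

/-- `(β̄, ᾱ)` is a saddle point of the Lagrangian `L`. -/
def IsSaddle {n p : ℕ} (x : Fin p → EuclideanSpace ℝ (Fin n)) (y : EuclideanSpace ℝ (Fin n))
    (l0 l1 l2 : ℝ) (βb : EuclideanSpace ℝ (Fin p)) (αb : EuclideanSpace ℝ (Fin n)) : Prop :=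
  (∀ α, Lag x y l0 l1 l2 βb α ≤ Lag x y l0 l1 l2 βb αb) ∧
  (∀ β, Lag x y l0 l1 l2 βb αb ≤ Lag x y l0 l1 l2 β αb)



/-! ### Auxiliary machinery -/

def phiAux (l0 l1 l2 b t : ℝ) : ℝ :=
  (if b ≠ 0 then l0 else 0) + l1 * |b| + l2 * b^2 - 2 * l2 * t * b

section scalar
variable {l0 l1 l2 : ℝ} (hl0 : 0 < l0) (hl1 : 0 ≤ l1) (hl2 : 0 < l2)
include hl0 hl1 hl2

lemma key_facts :
    ∃ c m : ℝ, 0 ≤ c ∧ 0 < m ∧ l1 = 2 * l2 * c ∧ l0 = l2 * m^2 ∧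
      eta0 l0 l1 l2 = c + m ∧ l1 / (2 * l2) = c := by
  refine ⟨l1 / (2 * l2), Real.sqrt (l0 * l2) / l2, by positivity, by positivity, ?_, ?_, ?_, rfl⟩
  · field_simp
  · have h : Real.sqrt (l0 * l2) ^ 2 = l0 * l2 := Real.sq_sqrt (by positivity)
    rw [div_pow, h]; field_simp
  · unfold eta0; field_simp; ring

lemma psi_le_phi (b t : ℝ) : psi l0 l1 l2 t ≤ phiAux l0 l1 l2 b t := by
  obtain ⟨c, m, hc, hm, hl1c, hl0m, heta, hdiv⟩ := key_facts hl0 hl1 hl2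
  have habs : t * b ≤ |t| * |b| := by
    calc t * b ≤ |t * b| := le_abs_self _
    _ = |t| * |b| := abs_mul t b
  have hb2 : b^2 = |b|^2 := (sq_abs b).symm
  unfold psi phiAux
  rw [heta, hdiv, hl1c]
  by_cases hb : b = 0
  · simp [hb]
    split
    · next h =>
        nlinarith [sq_nonneg (|t| - c - m), mul_nonneg hm.le (show (0:ℝ) ≤ |t| - c - m by linarith)]
    · linarith
  · simp only [hb, if_pos, ne_eq, not_false_iff, if_true]
    split
    · next h => nlinarith [abs_nonneg b, abs_nonneg t, sq_nonneg (|t| - c - |b|)]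
    · next h =>
      push_neg at h
      have hbpos : 0 < |b| := abs_pos.mpr hb
      have h2 : l2 * |b| * |t| ≤ l2 * |b| * (c + m) :=
        mul_le_mul_of_nonneg_left h.le (by positivity)
      have h3 : l2 * (t * b) ≤ l2 * (|t| * |b|) := mul_le_mul_of_nonneg_left habs hl2.le
      nlinarith [mul_nonneg hl2.le (sq_nonneg (m - |b|))]

lemma psi_eq_phi_B (t : ℝ) : psi l0 l1 l2 t = phiAux l0 l1 l2 (Bth l0 l1 l2 t) t := by
  obtain ⟨c, m, hc, hm, hl1c, hl0m, heta, hdiv⟩ := key_facts hl0 hl1 hl2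
  unfold psi Bth phiAux
  rw [heta, hdiv]
  by_cases h : c + m ≤ |t|
  · simp only [h, if_true]
    have ht0 : t ≠ 0 := by
      intro h0; rw [h0] at h; simp at h; nlinarith
    rcases ht0.lt_or_gt with hneg | hpos
    · have h' : c + m ≤ -t := by rwa [abs_of_neg hneg] at h
      have hu : 0 < -t - c := by linarith
      rw [Real.sign_of_neg hneg, abs_of_neg hneg]
      have hbne : (-1:ℝ) * (-t - c) ≠ 0 := by
        intro h0; nlinarith
      rw [if_pos hbne]
      have habsb : |(-1:ℝ) * (-t - c)| = -t - c := by
        rw [abs_mul, abs_neg, abs_one, one_mul, abs_of_pos hu]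
      rw [habsb, hl1c]; ring
    · have h' : c + m ≤ t := by rwa [abs_of_pos hpos] at h
      have hu : 0 < t - c := by linarith
      rw [Real.sign_of_pos hpos, abs_of_pos hpos]
      have hbne : (1:ℝ) * (t - c) ≠ 0 := by
        intro h0; nlinarith
      rw [if_pos hbne]
      have habsb : |(1:ℝ) * (t - c)| = t - c := by
        rw [abs_mul, abs_one, one_mul, abs_of_pos hu]
      rw [habsb, hl1c]; ring
  · simp [h]

lemma psi_concave_seg {s u v : ℝ} (hs0 : 0 ≤ s) (hs1 : s ≤ 1) :
    (1 - s) * psi l0 l1 l2 u + s * psi l0 l1 l2 v ≤ psi l0 l1 l2 ((1 - s) * u + s * v) := by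
  set w := (1 - s) * u + s * v with hw
  set b := Bth l0 l1 l2 w with hb
  have hEq : psi l0 l1 l2 w = phiAux l0 l1 l2 b w := psi_eq_phi_B hl0 hl1 hl2 w
  have hAff : phiAux l0 l1 l2 b w
      = (1 - s) * phiAux l0 l1 l2 b u + s * phiAux l0 l1 l2 b v := by
    unfold phiAux; rw [hw]; ring
  have hu := psi_le_phi hl0 hl1 hl2 b u
  have hv := psi_le_phi hl0 hl1 hl2 b v
  nlinarith [mul_le_mul_of_nonneg_left hu (by linarith : (0:ℝ) ≤ 1 - s),
    mul_le_mul_of_nonneg_left hv hs0]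

end scalar

section vec
variable {n p : ℕ} (x : Fin p → EuclideanSpace ℝ (Fin n)) (y : EuclideanSpace ℝ (Fin n))
  {l0 l1 l2 : ℝ} (hl0 : 0 < l0) (hl1 : 0 ≤ l1) (hl2 : 0 < l2)

lemma inner_Xmul (α : EuclideanSpace ℝ (Fin n)) (β : EuclideanSpace ℝ (Fin p)) :
    (inner ℝ α (Xmul x β) : ℝ) = ∑ j, β j * (inner ℝ α (x j) : ℝ) := by
  unfold Xmul; rw [inner_sum]; simp only [real_inner_smul_right]

lemma norm_sq_sum (β : EuclideanSpace ℝ (Fin p)) : ‖β‖^2 = ∑ j, (β j)^2 := by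
  rw [EuclideanSpace.norm_eq, Real.sq_sqrt (Finset.sum_nonneg fun j _ => sq_nonneg _)]
  simp [Real.norm_eq_abs, sq_abs]

lemma zeroNorm_sum (β : EuclideanSpace ℝ (Fin p)) :
    zeroNorm β = ∑ j, if β j ≠ 0 then (1:ℝ) else 0 := by
  unfold zeroNorm; rw [Finset.sum_boole]

include hl0 hl1 hl2

lemma Dobj_le_Lag (α : EuclideanSpace ℝ (Fin n)) (β : EuclideanSpace ℝ (Fin p)) :
    Dobj x y l0 l1 l2 α ≤ Lag x y l0 l1 l2 β α := by
  unfold Dobj Lag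
  have key : ∑ j : Fin p, psi l0 l1 l2 (etav x l2 α j)
      ≤ (inner ℝ α (Xmul x β) : ℝ) + l0 * zeroNorm β + l1 * oneNorm β + l2 * ‖β‖^2 := by
    have hrhs : (inner ℝ α (Xmul x β) : ℝ) + l0 * zeroNorm β + l1 * oneNorm β + l2 * ‖β‖^2
        = ∑ j, phiAux l0 l1 l2 (β j) (etav x l2 α j) := by
      rw [inner_Xmul, zeroNorm_sum, norm_sq_sum]
      unfold oneNorm phiAux
      rw [Finset.mul_sum, Finset.mul_sum, Finset.mul_sum, ← Finset.sum_add_distrib,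
        ← Finset.sum_add_distrib, ← Finset.sum_add_distrib]
      refine Finset.sum_congr rfl fun j _ => ?_
      have hη : -(2 * l2 * etav x l2 α j) = (inner ℝ α (x j) : ℝ) := by
        unfold etav
        rw [real_inner_comm]
        field_simp
      have : β j * (inner ℝ α (x j) : ℝ) = - (2 * l2 * etav x l2 α j * β j) := by
        rw [← hη]; ring
      rw [this]
      split <;> ring
    rw [hrhs]
    exact Finset.sum_le_sum fun j _ => psi_le_phi hl0 hl1 hl2 (β j) (etav x l2 α j)
  linarith

omit hl0 hl1 hl2 in
lemma Lag_le_Pobj (α : EuclideanSpace ℝ (Fin n)) (β : EuclideanSpace ℝ (Fin p)) :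
    Lag x y l0 l1 l2 β α ≤ Pobj x y l0 l1 l2 β := by
  unfold Lag Pobj
  set v := Xmul x β with hv
  have h1 : ‖y - v‖^2 = ‖y‖^2 - 2*(inner ℝ y v : ℝ) + ‖v‖^2 := norm_sub_sq_real y v
  have h2 : 0 ≤ ‖(y - v) + α‖^2 := sq_nonneg _
  have h3 : ‖(y - v) + α‖^2 = ‖y - v‖^2 + 2*(inner ℝ (y - v) α : ℝ) + ‖α‖^2 :=
    norm_add_sq_real (y - v) α
  have h4 : (inner ℝ (y - v) α : ℝ) = (inner ℝ y α : ℝ) - (inner ℝ v α : ℝ) := inner_sub_left y v α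
  have h5 : (inner ℝ α v : ℝ) = (inner ℝ v α : ℝ) := real_inner_comm v α
  nlinarith

lemma weak_duality (α : EuclideanSpace ℝ (Fin n)) (β : EuclideanSpace ℝ (Fin p)) :
    Dobj x y l0 l1 l2 α ≤ Pobj x y l0 l1 l2 β :=
  le_trans (Dobj_le_Lag x y hl0 hl1 hl2 α β) (Lag_le_Pobj x y α β)

omit hl0 hl1 hl2 in
lemma etav_combo (a b : EuclideanSpace ℝ (Fin n)) (t : ℝ) (j : Fin p) :
    etav x l2 ((1-t) • a + t • b) j = (1-t) * etav x l2 a j + t * etav x l2 b j := by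
  unfold etav
  rw [inner_add_right, real_inner_smul_right, real_inner_smul_right]
  ring

omit hl0 hl1 hl2 in
lemma limit_step {N G : ℝ} (hG : 0 ≤ G)
    (h : ∀ t : ℝ, 0 < t → t ≤ 1 → (1 - t) * N ≤ 2 * G) : N ≤ 2 * G := by
  by_cases hN : N ≤ 0
  · linarith
  · push_neg at hN
    by_contra hlt
    push_neg at hlt
    have hN' : N ≠ 0 := ne_of_gt hN
    have ht0 : 0 < (N - 2*G)/(2*N) := by apply div_pos <;> linarith
    have ht1 : (N - 2*G)/(2*N) ≤ 1 := by rw [div_le_one (by linarith)]; linarith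
    have hk := h _ ht0 ht1
    have htN : (N - 2*G)/(2*N) * N = (N - 2*G)/2 := by field_simp
    nlinarith [hk, htN]

lemma strong_max (αb : EuclideanSpace ℝ (Fin n))
    (hmax : ∀ α : EuclideanSpace ℝ (Fin n), Dobj x y l0 l1 l2 α ≤ Dobj x y l0 l1 l2 αb)
    (α : EuclideanSpace ℝ (Fin n)) :
    ‖α - αb‖^2 ≤ 2 * (Dobj x y l0 l1 l2 αb - Dobj x y l0 l1 l2 α) := by
  refine limit_step (by have := hmax α; linarith) ?_
  intro t ht0 ht1
  set w := (1-t) • αb + t • α with hw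
  have hD := hmax w
  have hquad : ‖w‖^2 = (1-t)^2 * ‖αb‖^2 + 2*t*(1-t)*(inner ℝ αb α : ℝ) + t^2*‖α‖^2 := by
    rw [hw, norm_add_sq_real, norm_smul, norm_smul, real_inner_smul_left,
      real_inner_smul_right]
    simp [mul_pow, sq_abs]
    ring
  have hdist : ‖α - αb‖^2 = ‖α‖^2 - 2*(inner ℝ αb α : ℝ) + ‖αb‖^2 := by
    rw [norm_sub_sq_real, real_inner_comm]
  have hww : ‖w‖^2 = (1-t)*‖αb‖^2 + t*‖α‖^2 - t*(1-t)*‖α - αb‖^2 := by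
    linear_combination hquad + t*(1-t)*hdist
  have hlin : (inner ℝ y w : ℝ) = (1-t) * (inner ℝ y αb : ℝ) + t * (inner ℝ y α : ℝ) := by
    rw [hw, inner_add_right, real_inner_smul_right, real_inner_smul_right]
  have hpsi : (1-t) * (∑ j : Fin p, psi l0 l1 l2 (etav x l2 αb j))
      + t * (∑ j : Fin p, psi l0 l1 l2 (etav x l2 α j))
      ≤ ∑ j : Fin p, psi l0 l1 l2 (etav x l2 w j) := by
    rw [Finset.mul_sum, Finset.mul_sum, ← Finset.sum_add_distrib]
    refine Finset.sum_le_sum fun j _ => ?_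
    rw [hw, etav_combo x]
    exact psi_concave_seg hl0 hl1 hl2 ht0.le ht1
  have hstep : t * ((1 - t) * ‖α - αb‖^2)
      ≤ t * (2 * (Dobj x y l0 l1 l2 αb - Dobj x y l0 l1 l2 α)) := by
    simp only [Dobj] at hD ⊢
    nlinarith [hpsi, hww, hlin, hD]
  exact le_of_mul_le_mul_left hstep ht0

end vec

/-- dual variable range estimation via the duality gap (square loss, μ = 1). -/
theorem stmt12 (n p : ℕ) (x : Fin p → EuclideanSpace ℝ (Fin n))
    (y : EuclideanSpace ℝ (Fin n)) (l0 l1 l2 : ℝ)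
    (hl0 : 0 < l0) (hl1 : 0 ≤ l1) (hl2 : 0 < l2)
    (αb : EuclideanSpace ℝ (Fin n))
    (hmax : ∀ α : EuclideanSpace ℝ (Fin n), Dobj x y l0 l1 l2 α ≤ Dobj x y l0 l1 l2 αb) :
    ∀ (α : EuclideanSpace ℝ (Fin n)) (β : EuclideanSpace ℝ (Fin p)),
      0 ≤ Pobj x y l0 l1 l2 β - Dobj x y l0 l1 l2 α ∧
      ‖α - αb‖ ≤ Real.sqrt (2 * (Pobj x y l0 l1 l2 β - Dobj x y l0 l1 l2 α)) := by
  intro α β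
  have hweak : Dobj x y l0 l1 l2 α ≤ Pobj x y l0 l1 l2 β := weak_duality x y hl0 hl1 hl2 α β
  have hweakb : Dobj x y l0 l1 l2 αb ≤ Pobj x y l0 l1 l2 β := weak_duality x y hl0 hl1 hl2 αb β
  have hstr := strong_max x y hl0 hl1 hl2 αb hmax α
  refine ⟨by linarith, ?_⟩
  have h1 : ‖α - αb‖^2 ≤ 2 * (Pobj x y l0 l1 l2 β - Dobj x y l0 l1 l2 α) := by linarith
  calc ‖α - αb‖ = Real.sqrt (‖α - αb‖^2) := (Real.sqrt_sq (norm_nonneg _)).symm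
  _ ≤ Real.sqrt (2 * (Pobj x y l0 l1 l2 β - Dobj x y l0 l1 l2 α)) := Real.sqrt_le_sqrt h1
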